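/- For every integer t ≥ 3 and every integer n, 4·P₁ − P₂ equals 2^{t+1} if n is odd and 2^{t+2} if n is even, where P₁ is the number of pairs (y,z) ∈ (ℤ/2^tℤ)² with y·z = n and P₂ is the number of pairs (y,z) ∈ (ℤ/2^tℤ)² with 4·y·z = n. -/

import Mathlib

-- fiber counting for the map {a // p (f a)} -> {b // p b}
lemma card_comap {α β : Type*} [Finite α] [Finite β] (f : α → β) (k : ℕ)
    (hf : ∀ b, Nat.card {a // f a = b} = k) (p : β → Prop) :
    Nat.card {a // p (f a)} = k * Nat.card {b // p b} := by
  classical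
  have := Fintype.ofFinite α
  have := Fintype.ofFinite β
  have e : {a // p (f a)} ≃ Σ b : {b // p b}, {a // f a = b.1} :=
  { toFun := fun a => ⟨⟨f a.1, a.2⟩, ⟨a.1, rfl⟩⟩
    invFun := fun x => ⟨x.2.1, by rw [x.2.2]; exact x.1.2⟩
    left_inv := fun a => rfl
    right_inv := fun x => by
      obtain ⟨⟨b, hb⟩, ⟨a, ha⟩⟩ := x
      simp only at ha
      subst ha; rfl }
  rw [Nat.card_congr e]
  simp only [Nat.card_eq_fintype_card, Fintype.card_sigma]
  have : ∀ b : {b // p b}, Fintype.card {a // f a = b.1} = k := by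
    intro b
    rw [← Nat.card_eq_fintype_card]; exact hf b.1
  simp [this, Finset.sum_const, mul_comm]

lemma card_fiber_castHom (M N : ℕ) (h : M ∣ N) (hN : N ≠ 0) (w : ZMod M) :
    Nat.card {z : ZMod N // ZMod.castHom h (ZMod M) z = w} = N / M := by
  have : NeZero N := ⟨hN⟩
  have hM : M ≠ 0 := fun hm => hN (by simpa [hm] using h)
  have : NeZero M := ⟨hM⟩
  -- translate to the kernel
  obtain ⟨z0, hz0⟩ : ∃ z0 : ZMod N, ZMod.castHom h (ZMod M) z0 = w :=
    ⟨(w.val : ZMod N), by rw [map_natCast, ZMod.natCast_val, ZMod.cast_id]⟩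
  have e1 : {z : ZMod N // ZMod.castHom h (ZMod M) z = w} ≃
      {z : ZMod N // ZMod.castHom h (ZMod M) z = 0} :=
  { toFun := fun z => ⟨z.1 - z0, by rw [map_sub, z.2, hz0, sub_self]⟩
    invFun := fun z => ⟨z.1 + z0, by rw [map_add, z.2, hz0, zero_add]⟩
    left_inv := fun z => by ext; simp
    right_inv := fun z => by ext; simp }
  rw [Nat.card_congr e1]
  -- kernel ≃ Fin (N / M)
  have e2 : Fin (N / M) ≃ {z : ZMod N // ZMod.castHom h (ZMod M) z = 0} := by
    refine Equiv.ofBijective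
      (fun q => ⟨((M * (q : ℕ) : ℕ) : ZMod N), by
        rw [map_natCast, ZMod.natCast_eq_zero_iff]
        exact Dvd.intro _ rfl⟩) ⟨?_, ?_⟩
    · intro q1 q2 hq
      have hlt : ∀ q : Fin (N / M), M * (q : ℕ) < N := by
        intro q
        calc M * (q : ℕ) < M * (N / M) :=
          (Nat.mul_lt_mul_left (Nat.pos_of_ne_zero hM)).2 q.2
        _ = N := Nat.mul_div_cancel' h
      have := congrArg ZMod.val (Subtype.mk.injEq .. ▸ hq)
      rw [ZMod.val_natCast_of_lt (hlt q1), ZMod.val_natCast_of_lt (hlt q2)] at this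
      exact Fin.ext (Nat.eq_of_mul_eq_mul_left (Nat.pos_of_ne_zero hM) this)
    · rintro ⟨z, hz⟩
      have hz' : (z.val : ZMod M) = 0 := by
        rwa [← map_natCast (ZMod.castHom h (ZMod M)), ZMod.natCast_val, ZMod.cast_id]
      rw [ZMod.natCast_eq_zero_iff] at hz'
      refine ⟨⟨z.val / M, Nat.div_lt_div_of_lt_of_dvd h (ZMod.val_lt z)⟩, ?_⟩
      ext
      simp only
      rw [Nat.mul_div_cancel' hz', ZMod.natCast_val, ZMod.cast_id]
  rw [← Nat.card_congr e2, Nat.card_eq_fintype_card, Fintype.card_fin]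

/-- The number of solutions `(y,z)` in `ℤ/2^tℤ` of `y z = n`. -/
noncomputable def P1 (t : ℕ) (n : ℤ) : ℕ :=
  Nat.card {v : ZMod (2 ^ t) × ZMod (2 ^ t) | v.1 * v.2 = (n : ZMod (2 ^ t))}

/-- The number of solutions `(y,z)` in `ℤ/2^tℤ` of `4 y z = n`. -/
noncomputable def P2 (t : ℕ) (n : ℤ) : ℕ :=
  Nat.card {v : ZMod (2 ^ t) × ZMod (2 ^ t) | 4 * v.1 * v.2 = (n : ZMod (2 ^ t))}

-- solutions with unit first coordinate ≃ units
noncomputable def unitPart_equiv {R : Type*} [CommMonoid R] (c : R) :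
    {v : R × R // v.1 * v.2 = c ∧ IsUnit v.1} ≃ Rˣ :=
{ toFun := fun v => v.2.2.unit
  invFun := fun u => ⟨(u, (u⁻¹ : Rˣ) * c), by simp, u.isUnit⟩
  left_inv := by
    rintro ⟨⟨y, z⟩, h, hy⟩
    have h1 : (hy.unit : R) = y := hy.unit_spec
    ext
    · exact h1
    · simp only
      have hz : ((hy.unit⁻¹ : Rˣ) : R) * (↑hy.unit * z) = z := Units.inv_mul_cancel_left _ _
      rw [h1] at hz
      rw [h] at hz
      exact hz
  right_inv := fun u => by
    apply Units.ext
    simp }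

lemma card_units_two_pow (t : ℕ) (ht : 1 ≤ t) :
    Nat.card (ZMod (2 ^ t))ˣ = 2 ^ (t - 1) := by
  have : Fact (Nat.Prime 2) := ⟨Nat.prime_two⟩
  have : NeZero (2 ^ t) := ⟨by positivity⟩
  rw [Nat.card_eq_fintype_card, ZMod.card_units_eq_totient,
    Nat.totient_prime_pow Nat.prime_two (by omega : 0 < t)]
  simp

lemma isUnit_of_odd (t : ℕ) (n : ℤ) (hn : Odd n) : IsUnit ((n : ZMod (2 ^ t))) := by
  have h2 : ¬ (2 : ℤ) ∣ n := by
    obtain ⟨k, rfl⟩ := hn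
    rintro ⟨c, hc⟩
    omega
  have hcop : IsCoprime n ((2 : ℤ) ^ t) :=
    (((Int.prime_two.coprime_iff_not_dvd).2 h2).symm).pow_right
  obtain ⟨a, b, hab⟩ := hcop
  have : (n : ZMod (2 ^ t)) * (a : ZMod (2 ^ t)) = 1 := by
    have := congrArg (fun x : ℤ => (x : ZMod (2 ^ t))) hab
    push_cast at this
    have hz : (2 : ZMod (2 ^ t)) ^ t = 0 := by
      have h0 := ZMod.natCast_self (2 ^ t)
      push_cast at h0
      exact h0
    rw [hz, mul_zero, add_zero] at this
    rw [mul_comm]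
    exact this
  exact IsUnit.of_mul_eq_one _ this

lemma P1_odd (t : ℕ) (ht : 1 ≤ t) (n : ℤ) (hn : Odd n) : P1 t n = 2 ^ (t - 1) := by
  rw [P1]
  show Nat.card {v : ZMod (2 ^ t) × ZMod (2 ^ t) // v.1 * v.2 = (n : ZMod (2 ^ t))} = _
  set c : ZMod (2 ^ t) := (n : ZMod (2 ^ t)) with hc
  have hu : IsUnit c := isUnit_of_odd t n hn
  have e : {v : ZMod (2 ^ t) × ZMod (2 ^ t) // v.1 * v.2 = c} ≃
      {v : ZMod (2 ^ t) × ZMod (2 ^ t) // v.1 * v.2 = c ∧ IsUnit v.1} :=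
    Equiv.subtypeEquivRight (fun v => ⟨fun h => ⟨h, isUnit_of_mul_isUnit_left (h ▸ hu)⟩,
      fun h => h.1⟩)
  rw [Nat.card_congr (e.trans (unitPart_equiv c))]
  exact card_units_two_pow t ht

lemma split_card {α : Type*} [Finite α] (P Q : α → Prop) :
    Nat.card {a // P a} = Nat.card {a // P a ∧ Q a} + Nat.card {a // P a ∧ ¬Q a} := by
  classical
  have e : {a // P a ∧ Q a} ⊕ {a // P a ∧ ¬Q a} ≃ {a // P a} :=
    ((Equiv.sumCongr (Equiv.subtypeSubtypeEquivSubtypeInter P Q)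
      (Equiv.subtypeSubtypeEquivSubtypeInter P (fun a => ¬Q a))).symm).trans
      (Equiv.sumCompl (fun x : {a // P a} => Q x.1))
  rw [← Nat.card_congr e, Nat.card_sum]

lemma P2_not_dvd (t : ℕ) (ht : 2 ≤ t) (n : ℤ) (hn : ¬ (4 : ℤ) ∣ n) : P2 t n = 0 := by
  have dv : (4 : ℕ) ∣ 2 ^ t := by
    have : (2 : ℕ) ^ 2 ∣ 2 ^ t := pow_dvd_pow 2 ht
    norm_num at this
    exact this
  rw [P2]
  show Nat.card {v : ZMod (2 ^ t) × ZMod (2 ^ t) // 4 * v.1 * v.2 = (n : ZMod (2 ^ t))} = 0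
  have : IsEmpty {v : ZMod (2 ^ t) × ZMod (2 ^ t) //
      4 * v.1 * v.2 = (n : ZMod (2 ^ t))} := by
    refine ⟨fun v => hn ?_⟩
    have h := congrArg (ZMod.castHom dv (ZMod 4)) v.2
    rw [map_mul, map_mul, map_ofNat, map_intCast] at h
    have h4 : (4 : ZMod 4) = 0 := by decide
    rw [h4, zero_mul, zero_mul] at h
    have := (ZMod.intCast_zmod_eq_zero_iff_dvd n 4).1 h.symm
    exact_mod_cast this
  exact Nat.card_of_isEmpty

lemma cond_two (s : ℕ) (m α ζ : ℤ) :
    ((2 * α * ζ : ℤ) : ZMod (2 ^ (s + 1))) = ((2 * m : ℤ) : ZMod (2 ^ (s + 1))) ↔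
    ((α * ζ : ℤ) : ZMod (2 ^ s)) = ((m : ℤ) : ZMod (2 ^ s)) := by
  rw [ZMod.intCast_eq_intCast_iff, ZMod.intCast_eq_intCast_iff,
    Int.modEq_iff_dvd, Int.modEq_iff_dvd]
  push_cast
  rw [show (2 : ℤ) * m - 2 * α * ζ = 2 * (m - α * ζ) by ring, pow_succ,
    mul_comm ((2 : ℤ) ^ s) 2]
  exact mul_dvd_mul_iff_left two_ne_zero

lemma cond_four (s : ℕ) (m α ζ : ℤ) :
    ((4 * α * ζ : ℤ) : ZMod (2 ^ (s + 2))) = ((4 * m : ℤ) : ZMod (2 ^ (s + 2))) ↔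
    ((α * ζ : ℤ) : ZMod (2 ^ s)) = ((m : ℤ) : ZMod (2 ^ s)) := by
  rw [ZMod.intCast_eq_intCast_iff, ZMod.intCast_eq_intCast_iff,
    Int.modEq_iff_dvd, Int.modEq_iff_dvd]
  push_cast
  rw [show (4 : ℤ) * m - 4 * α * ζ = 4 * (m - α * ζ) by ring,
    show (2 : ℤ) ^ (s + 2) = 4 * 2 ^ s by ring]
  exact mul_dvd_mul_iff_left (by norm_num)

lemma P2_rec (s : ℕ) (m : ℤ) : P2 (s + 2) (4 * m) = 16 * P1 s m := by
  have dv : (2 : ℕ) ^ s ∣ 2 ^ (s + 2) := pow_dvd_pow 2 (by omega)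
  set σ := ZMod.castHom dv (ZMod (2 ^ s)) with hσ
  have key : ∀ y z : ZMod (2 ^ (s + 2)),
      (4 * y * z = ((4 * m : ℤ) : ZMod (2 ^ (s + 2))) ↔
        σ y * σ z = ((m : ℤ) : ZMod (2 ^ s))) := by
    intro y z
    obtain ⟨α, rfl⟩ := ZMod.intCast_surjective y
    obtain ⟨ζ, rfl⟩ := ZMod.intCast_surjective z
    rw [map_intCast, map_intCast,
      show (4 : ZMod (2 ^ (s + 2))) * (α : ZMod (2 ^ (s + 2))) * (ζ : ZMod (2 ^ (s + 2)))
        = ((4 * α * ζ : ℤ) : ZMod (2 ^ (s + 2))) by push_cast; ring,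
      show ((α : ℤ) : ZMod (2 ^ s)) * ((ζ : ℤ) : ZMod (2 ^ s))
        = ((α * ζ : ℤ) : ZMod (2 ^ s)) by push_cast; ring]
    exact cond_four s m α ζ
  have hfib : ∀ y : ZMod (2 ^ s) × ZMod (2 ^ s),
      Nat.card {v : ZMod (2 ^ (s + 2)) × ZMod (2 ^ (s + 2)) //
        (σ v.1, σ v.2) = y} = 16 := by
    intro y
    have e1 : {v : ZMod (2 ^ (s + 2)) × ZMod (2 ^ (s + 2)) // (σ v.1, σ v.2) = y} ≃
        {v : ZMod (2 ^ (s + 2)) × ZMod (2 ^ (s + 2)) // σ v.1 = y.1 ∧ σ v.2 = y.2} :=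
      Equiv.subtypeEquivRight (fun v => by rw [Prod.ext_iff])
    rw [Nat.card_congr (e1.trans (Equiv.subtypeProdEquivProd (p := fun a => σ a = y.1) (q := fun b => σ b = y.2))), Nat.card_prod,
      card_fiber_castHom _ _ dv (by positivity) y.1,
      card_fiber_castHom _ _ dv (by positivity) y.2]
    rw [show (2 : ℕ) ^ (s + 2) = 2 ^ s * 4 by ring, Nat.mul_div_cancel_left _ (by positivity)]
  rw [P2]
  have e0 : {v : ZMod (2 ^ (s + 2)) × ZMod (2 ^ (s + 2)) //
      4 * v.1 * v.2 = ((4 * m : ℤ) : ZMod (2 ^ (s + 2)))} ≃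
      {v : ZMod (2 ^ (s + 2)) × ZMod (2 ^ (s + 2)) //
        (fun u : ZMod (2 ^ s) × ZMod (2 ^ s) => u.1 * u.2 = ((m : ℤ) : ZMod (2 ^ s)))
          ((fun v : ZMod (2 ^ (s + 2)) × ZMod (2 ^ (s + 2)) => (σ v.1, σ v.2)) v)} :=
    Equiv.subtypeEquivRight (fun v => key v.1 v.2)
  rw [show Nat.card {v : ZMod (2 ^ (s + 2)) × ZMod (2 ^ (s + 2)) |
      4 * v.1 * v.2 = ((4 * m : ℤ) : ZMod (2 ^ (s + 2)))} =
      Nat.card {v : ZMod (2 ^ (s + 2)) × ZMod (2 ^ (s + 2)) //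
      4 * v.1 * v.2 = ((4 * m : ℤ) : ZMod (2 ^ (s + 2)))} from rfl,
    Nat.card_congr e0,
    card_comap (fun v : ZMod (2 ^ (s + 2)) × ZMod (2 ^ (s + 2)) => (σ v.1, σ v.2)) 16 hfib
      (fun u : ZMod (2 ^ s) × ZMod (2 ^ s) => u.1 * u.2 = ((m : ℤ) : ZMod (2 ^ s))), P1]
  rfl

lemma P1_rec (s : ℕ) (m : ℤ) : P1 (s + 1) (2 * m) = 2 ^ s + 2 * P1 s m := by
  have dv : (2 : ℕ) ^ s ∣ 2 ^ (s + 1) := pow_dvd_pow 2 (by omega)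
  set ρ := ZMod.castHom dv (ZMod (2 ^ s)) with hρ
  set c : ZMod (2 ^ (s + 1)) := ((2 * m : ℤ) : ZMod (2 ^ (s + 1))) with hc
  have hpow : (2 : ℕ) ^ (s + 1) = 2 * 2 ^ s := by ring
  have hvlt : ∀ a : ZMod (2 ^ s), a.val < 2 ^ s := fun a => ZMod.val_lt a
  -- 2 is not a unit
  have h2nu : ¬IsUnit (2 : ZMod (2 ^ (s + 1))) := by
    intro h
    rw [show (2 : ZMod (2 ^ (s + 1))) = ((2 : ℕ) : ZMod (2 ^ (s + 1))) by push_cast; rfl,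
      ZMod.isUnit_iff_coprime] at h
    have h2 : (2 : ℕ) ∣ 2 ^ (s + 1) := dvd_pow_self 2 (Nat.succ_ne_zero s)
    have := h.eq_one_of_dvd h2
    omega
  -- nonunits have even val
  have heven : ∀ y : ZMod (2 ^ (s + 1)), ¬IsUnit y → 2 ∣ y.val := by
    intro y hy
    by_contra h
    apply hy
    have hcop : Nat.Coprime y.val 2 := (Nat.coprime_comm.1
      ((Nat.prime_two.coprime_iff_not_dvd).2 h))
    have : Nat.Coprime y.val (2 ^ (s + 1)) := hcop.pow_right _
    have := (ZMod.isUnit_iff_coprime y.val (2 ^ (s + 1))).2 this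
    rwa [ZMod.natCast_rightInverse y] at this
  -- F3
  have F3 : ∀ y : ZMod (2 ^ (s + 1)), 2 ∣ y.val →
      2 * ((((y.val / 2 : ℕ) : ZMod (2 ^ s)).val : ℕ) : ZMod (2 ^ (s + 1))) = y := by
    intro y hy
    have h1 : y.val / 2 < 2 ^ s := by
      have h2 := ZMod.val_lt y
      omega
    rw [ZMod.val_natCast_of_lt h1]
    rw [show (2 : ZMod (2 ^ (s + 1))) * ((y.val / 2 : ℕ) : ZMod (2 ^ (s + 1)))
      = ((2 * (y.val / 2) : ℕ) : ZMod (2 ^ (s + 1))) by push_cast; ring]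
    rw [Nat.mul_div_cancel' hy]
    exact ZMod.natCast_rightInverse y
  -- F2
  have F2 : ∀ a : ZMod (2 ^ s),
      ((((2 * ((a.val : ℕ) : ZMod (2 ^ (s + 1)))).val / 2 : ℕ)) : ZMod (2 ^ s)) = a := by
    intro a
    rw [show (2 : ZMod (2 ^ (s + 1))) * ((a.val : ℕ) : ZMod (2 ^ (s + 1)))
      = ((2 * a.val : ℕ) : ZMod (2 ^ (s + 1))) by push_cast; ring]
    rw [ZMod.val_natCast_of_lt (by rw [hpow]; have := hvlt a; omega)]
    rw [Nat.mul_div_cancel_left _ (by norm_num)]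
    exact ZMod.natCast_rightInverse a
  -- key condition translation
  have key : ∀ (a : ZMod (2 ^ s)) (z : ZMod (2 ^ (s + 1))),
      2 * ((a.val : ℕ) : ZMod (2 ^ (s + 1))) * z = c ↔
      a * ρ z = ((m : ℤ) : ZMod (2 ^ s)) := by
    intro a z
    obtain ⟨ζ, rfl⟩ := ZMod.intCast_surjective z
    rw [map_intCast]
    have ha : (((a.val : ℤ)) : ZMod (2 ^ s)) = a := by
      push_cast
      exact ZMod.natCast_rightInverse a
    rw [show (2 : ZMod (2 ^ (s + 1))) * ((a.val : ℕ) : ZMod (2 ^ (s + 1)))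
        * ((ζ : ℤ) : ZMod (2 ^ (s + 1)))
        = ((2 * (a.val : ℤ) * ζ : ℤ) : ZMod (2 ^ (s + 1))) by push_cast; ring, hc]
    conv_rhs => rw [← ha]
    rw [show (((a.val : ℤ)) : ZMod (2 ^ s)) * ((ζ : ℤ) : ZMod (2 ^ s))
        = (((a.val : ℤ) * ζ : ℤ) : ZMod (2 ^ s)) by push_cast; ring]
    exact cond_two s m (a.val : ℤ) ζ
  -- fibers of (w.1, ρ w.2)
  have hfib : ∀ y : ZMod (2 ^ s) × ZMod (2 ^ s),
      Nat.card {w : ZMod (2 ^ s) × ZMod (2 ^ (s + 1)) // (w.1, ρ w.2) = y} = 2 := by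
    intro y
    have e1 : {w : ZMod (2 ^ s) × ZMod (2 ^ (s + 1)) // (w.1, ρ w.2) = y} ≃
        {w : ZMod (2 ^ s) × ZMod (2 ^ (s + 1)) // w.1 = y.1 ∧ ρ w.2 = y.2} :=
      Equiv.subtypeEquivRight (fun w => by rw [Prod.ext_iff])
    rw [Nat.card_congr (e1.trans (Equiv.subtypeProdEquivProd
        (p := fun a : ZMod (2 ^ s) => a = y.1)
        (q := fun z : ZMod (2 ^ (s + 1)) => ρ z = y.2))), Nat.card_prod,
      card_fiber_castHom _ _ dv (by positivity) y.2,
      Nat.card_eq_fintype_card, Fintype.card_subtype_eq,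
      show (2 : ℕ) ^ (s + 1) = 2 ^ s * 2 by ring,
      Nat.mul_div_cancel_left _ (by positivity), one_mul]
  -- nonunit part equiv
  have E : {w : ZMod (2 ^ s) × ZMod (2 ^ (s + 1)) //
      2 * ((w.1.val : ℕ) : ZMod (2 ^ (s + 1))) * w.2 = c} ≃
      {v : ZMod (2 ^ (s + 1)) × ZMod (2 ^ (s + 1)) // v.1 * v.2 = c ∧ ¬IsUnit v.1} :=
  { toFun := fun w => ⟨(2 * ((w.1.1.val : ℕ) : ZMod (2 ^ (s + 1))), w.1.2),
      ⟨w.2, fun h => h2nu (isUnit_of_mul_isUnit_left h)⟩⟩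
    invFun := fun v => ⟨(((v.1.1.val / 2 : ℕ) : ZMod (2 ^ s)), v.1.2), by
      have h3 := F3 v.1.1 (heven v.1.1 v.2.2)
      rw [h3]
      exact v.2.1⟩
    left_inv := fun w => by
      apply Subtype.ext
      apply Prod.ext
      · exact F2 w.1.1
      · rfl
    right_inv := fun v => by
      apply Subtype.ext
      apply Prod.ext
      · exact F3 v.1.1 (heven v.1.1 v.2.2)
      · rfl }
  have hunit : Nat.card {v : ZMod (2 ^ (s + 1)) × ZMod (2 ^ (s + 1)) //
      v.1 * v.2 = c ∧ IsUnit v.1} = 2 ^ s := by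
    rw [Nat.card_congr (unitPart_equiv c), card_units_two_pow (s + 1) (by omega)]
    simp
  have hnon : Nat.card {v : ZMod (2 ^ (s + 1)) × ZMod (2 ^ (s + 1)) //
      v.1 * v.2 = c ∧ ¬IsUnit v.1} = 2 * P1 s m := by
    rw [← Nat.card_congr E,
      Nat.card_congr (Equiv.subtypeEquivRight (fun w => key w.1 w.2) :
        _ ≃ {w : ZMod (2 ^ s) × ZMod (2 ^ (s + 1)) //
          (fun u : ZMod (2 ^ s) × ZMod (2 ^ s) => u.1 * u.2 = ((m : ℤ) : ZMod (2 ^ s)))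
            ((fun w : ZMod (2 ^ s) × ZMod (2 ^ (s + 1)) => (w.1, ρ w.2)) w)}),
      card_comap (fun w : ZMod (2 ^ s) × ZMod (2 ^ (s + 1)) => (w.1, ρ w.2)) 2 hfib
        (fun u : ZMod (2 ^ s) × ZMod (2 ^ s) => u.1 * u.2 = ((m : ℤ) : ZMod (2 ^ s))), P1]
    rfl
  rw [P1]
  show Nat.card {v : ZMod (2 ^ (s + 1)) × ZMod (2 ^ (s + 1)) // v.1 * v.2 = c} = _
  rw [split_card (fun v : ZMod (2 ^ (s + 1)) × ZMod (2 ^ (s + 1)) => v.1 * v.2 = c)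
    (fun v => IsUnit v.1), hunit, hnon]

theorem dyadic_pair_count (t : ℕ) (ht : 3 ≤ t) (n : ℤ) :
    (Odd n → 4 * (P1 t n : ℤ) - (P2 t n : ℤ) = 2 ^ (t + 1)) ∧
    (Even n → 4 * (P1 t n : ℤ) - (P2 t n : ℤ) = 2 ^ (t + 2)) := by
  obtain ⟨r, rfl⟩ : ∃ r, t = r + 3 := ⟨t - 3, by omega⟩
  constructor
  · intro hodd
    have h1 : P1 (r + 3) n = 2 ^ (r + 3 - 1) := P1_odd (r + 3) (by omega) n hodd
    have h2 : P2 (r + 3) n = 0 := by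
      refine P2_not_dvd (r + 3) (by omega) n ?_
      obtain ⟨k, rfl⟩ := hodd
      rintro ⟨c, hc⟩
      omega
    rw [h1, h2]
    have : r + 3 - 1 = r + 2 := by omega
    rw [this]
    push_cast
    ring
  · intro heven
    obtain ⟨k, hk⟩ := heven
    have hn : n = 2 * k := by omega
    rcases Int.even_or_odd k with hk2 | hk2
    · -- n = 4 j
      obtain ⟨j, hj⟩ := hk2
      have hn4 : n = 2 * (2 * j) := by omega
      have h1 : P1 (r + 3) n = 2 ^ (r + 2) + 2 * P1 (r + 2) (2 * j) := by
        rw [hn4]; exact P1_rec (r + 2) (2 * j)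
      have h1' : P1 (r + 2) (2 * j) = 2 ^ (r + 1) + 2 * P1 (r + 1) j := P1_rec (r + 1) j
      have h2 : P2 (r + 3) n = 16 * P1 (r + 1) j := by
        rw [show n = 4 * j by omega]
        exact P2_rec (r + 1) j
      rw [h1, h1', h2]
      push_cast
      ring
    · -- n = 2 k, k odd
      have h1 : P1 (r + 3) n = 2 ^ (r + 2) + 2 * P1 (r + 2) k := by
        rw [hn]; exact P1_rec (r + 2) k
      have h1' : P1 (r + 2) k = 2 ^ (r + 1) := by
        have h := P1_odd (r + 2) (by omega) k hk2
        rw [h, show r + 2 - 1 = r + 1 by omega]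
      have h2 : P2 (r + 3) n = 0 := by
        refine P2_not_dvd (r + 3) (by omega) n ?_
        obtain ⟨a, ha⟩ := hk2
        rintro ⟨c, hc⟩
        omega
      rw [h1, h1', h2]
      push_cast
      ring
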